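/- Let κ > 0, r = 2(1+κ), β > 0, k̂ > 0, Σ ≥ 0, and let σ : [k̂, ∞) → [0, ∞) be nonincreasing with σ(k) ≤ Σ for all k ≥ k̂, satisfying σ(k')^{1/r} ≤ (β·k/(k' − k))·σ(k)^{1/2} for all k̂ ≤ k < k'. Set m₀ = 1 + β·Σ^{1/2}·(4β)^{1/κ}·2^{1/κ²} and M₀ = m₀·k̂. Then σ(2M₀) = 0. -/

import Mathlib

open Set

/-- Stampacchia/De Giorgi iteration lemma for the super-level-set function σ. -/
theorem stmt_7 (κ β khat Sig : ℝ) (hκ : 0 < κ) (hβ : 0 < β) (hkhat : 0 < khat)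
    (hSig : 0 ≤ Sig) (r : ℝ) (hr : r = 2 * (1 + κ))
    (σ : ℝ → ℝ)
    (hσ_nonneg : ∀ k, khat ≤ k → 0 ≤ σ k)
    (hσ_anti : AntitoneOn σ (Ici khat))
    (hσ_le : ∀ k, khat ≤ k → σ k ≤ Sig)
    (hiter : ∀ k k' : ℝ, khat ≤ k → k < k' →
      (σ k') ^ (1 / r) ≤ (β * k / (k' - k)) * (σ k) ^ ((1 : ℝ) / 2))
    (m₀ M₀ : ℝ)
    (hm₀ : m₀ = 1 + β * Sig ^ ((1 : ℝ) / 2) * (4 * β) ^ (1 / κ) * 2 ^ (1 / κ ^ 2))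
    (hM₀ : M₀ = m₀ * khat) :
    σ (2 * M₀) = 0 := by
  have hκ' : κ ≠ 0 := ne_of_gt hκ
  have h1κ : (0:ℝ) < 1 + κ := by linarith
  have hrpos : 0 < r := by rw [hr]; linarith
  have h4β : (0:ℝ) < 4 * β := by linarith
  have hApos : (0:ℝ) < (4*β) ^ (1/κ) := Real.rpow_pos_of_pos h4β _
  have hBpos : (0:ℝ) < (2:ℝ) ^ (1/κ^2) := Real.rpow_pos_of_pos two_pos _
  have hsnn : (0:ℝ) ≤ Sig ^ ((1:ℝ)/2) := Real.rpow_nonneg hSig _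
  have hm₀1 : 1 ≤ m₀ := by
    rw [hm₀]
    nlinarith [mul_nonneg (mul_nonneg (mul_nonneg hβ.le hsnn) hApos.le) hBpos.le]
  have hkM : khat ≤ M₀ := by rw [hM₀]; nlinarith
  have h2M : khat ≤ 2 * M₀ := by linarith
  have hσ2Mnn : 0 ≤ σ (2*M₀) := hσ_nonneg _ h2M
  rcases hSig.eq_or_lt with hS | hS
  · -- Sig = 0 : trivial
    have h1 : σ (2*M₀) ≤ σ khat :=
      hσ_anti (mem_Ici.mpr le_rfl) (mem_Ici.mpr h2M) h2M
    have h2 : σ khat ≤ Sig := hσ_le _ le_rfl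
    linarith [hσ2Mnn, h1, h2, hS.symm]
  -- main case: Sig > 0
  have hspos : (0:ℝ) < Sig ^ ((1:ℝ)/2) := Real.rpow_pos_of_pos hS _
  have hM₀pos : 0 < M₀ := lt_of_lt_of_le hkhat hkM
  have hklt : khat < M₀ := by
    rw [hM₀, hm₀]
    nlinarith [mul_pos (mul_pos (mul_pos hβ hspos) hApos) hBpos]
  set k : ℕ → ℝ := fun n => M₀ * (2 - (1/2:ℝ)^n) with hk_def
  have hk_ge : ∀ n, khat ≤ k n := by
    intro n
    have h1 : (1/2:ℝ)^n ≤ 1 := pow_le_one₀ (by norm_num) (by norm_num)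
    have h2 : M₀ ≤ k n := by simp only [hk_def]; nlinarith
    linarith
  have hk_lt2 : ∀ n, k n ≤ 2 * M₀ := by
    intro n
    have h1 : (0:ℝ) < (1/2:ℝ)^n := by positivity
    simp only [hk_def]; nlinarith
  have hk_succ : ∀ n, k (n+1) - k n = M₀ * (1/2:ℝ)^(n+1) := by
    intro n
    simp only [hk_def, pow_succ]
    ring
  have hk_mono : ∀ n, k n < k (n+1) := by
    intro n
    have h1 : (0:ℝ) < M₀ * (1/2:ℝ)^(n+1) := by positivity
    have := hk_succ n
    linarith
  set b : ℕ → ℝ := fun n => (σ (k n)) ^ (1/r) with hb_def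
  have hb_nonneg : ∀ n, 0 ≤ b n := fun n => Real.rpow_nonneg (hσ_nonneg _ (hk_ge n)) _
  -- σ(k n)^(1/2) = (b n)^(1+κ)
  have hσ_half : ∀ n, (σ (k n)) ^ ((1:ℝ)/2) = (b n) ^ (1+κ) := by
    intro n
    simp only [hb_def]
    rw [← Real.rpow_mul (hσ_nonneg _ (hk_ge n))]
    congr 1
    rw [hr]
    field_simp
  -- recursion step
  have hstep : ∀ n : ℕ, b (n+1) ≤ (4*β) * 2^n * (b n) ^ (1+κ) := by
    intro n
    have h1 := hiter (k n) (k (n+1)) (hk_ge n) (hk_mono n)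
    rw [hσ_half n] at h1
    have hd : 0 < k (n+1) - k n := by rw [hk_succ]; positivity
    have h2n : (2:ℝ)^n * (1/2:ℝ)^n = 1 := by rw [← mul_pow]; norm_num
    have hcoef : β * k n / (k (n+1) - k n) ≤ (4*β) * 2^n := by
      rw [div_le_iff₀ hd, hk_succ]
      have h2 : k n ≤ 2*M₀ := hk_lt2 n
      have h3 : ((4*β) * 2^n) * (M₀ * (1/2:ℝ)^(n+1)) = 2*β*M₀ := by
        rw [pow_succ]
        linear_combination (2*β*M₀) * h2n
      rw [h3]
      nlinarith
    calc b (n+1) ≤ (β * k n / (k (n+1) - k n)) * (b n)^(1+κ) := h1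
      _ ≤ (4*β) * 2^n * (b n)^(1+κ) :=
          mul_le_mul_of_nonneg_right hcoef (Real.rpow_nonneg (hb_nonneg n) _)
  -- base bound
  have hb0 : b 0 ≤ ((4*β) ^ (1/κ))⁻¹ * ((2:ℝ) ^ (1/κ^2))⁻¹ := by
    have h1 := hiter khat M₀ le_rfl hklt
    have h2 : σ khat ^ ((1:ℝ)/2) ≤ Sig ^ ((1:ℝ)/2) :=
      Real.rpow_le_rpow (hσ_nonneg _ le_rfl) (hσ_le _ le_rfl) (by norm_num)
    have hMk : M₀ - khat = khat * (β * Sig ^ ((1:ℝ)/2) * (4*β)^(1/κ) * 2^(1/κ^2)) := by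
      rw [hM₀, hm₀]; ring
    have hden : 0 < M₀ - khat := by linarith
    have h3 : β * khat / (M₀ - khat) * σ khat ^ ((1:ℝ)/2)
        ≤ β * khat / (M₀ - khat) * Sig ^ ((1:ℝ)/2) :=
      mul_le_mul_of_nonneg_left h2 (by positivity)
    have h4 : β * khat / (M₀ - khat) * Sig ^ ((1:ℝ)/2)
        = ((4*β)^(1/κ))⁻¹ * ((2:ℝ)^(1/κ^2))⁻¹ := by
      rw [hMk]
      field_simp
    have hk0 : k 0 = M₀ := by norm_num [hk_def]
    calc b 0 = σ M₀ ^ (1/r) := by rw [hb_def]; simp only; rw [hk0]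
      _ ≤ β * khat / (M₀ - khat) * σ khat ^ ((1:ℝ)/2) := h1
      _ ≤ β * khat / (M₀ - khat) * Sig ^ ((1:ℝ)/2) := h3
      _ = ((4*β)^(1/κ))⁻¹ * ((2:ℝ)^(1/κ^2))⁻¹ := h4
  set D1 : ℝ := (4*β)^(-(1/κ):ℝ) with hD1_def
  -- algebraic identity for the induction step
  have hident : ∀ n : ℕ, (4*β) * (2:ℝ)^n * (D1 * (2:ℝ)^((-(1/κ^2) - n/κ) : ℝ))^(1+κ)
      = D1 * (2:ℝ)^((-(1/κ^2) - ((n:ℝ)+1)/κ) : ℝ) := by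
    intro n
    have e1 : (D1 * (2:ℝ)^((-(1/κ^2) - n/κ) : ℝ))^(1+κ)
        = (4*β)^((-(1/κ))*(1+κ)) * (2:ℝ)^((-(1/κ^2) - n/κ)*(1+κ)) := by
      rw [hD1_def, Real.mul_rpow (Real.rpow_nonneg h4β.le _) (Real.rpow_nonneg (by norm_num) _),
        ← Real.rpow_mul h4β.le, ← Real.rpow_mul (by norm_num : (0:ℝ) ≤ 2)]
    rw [e1]
    have ha : (4*β) * (4*β)^((-(1/κ))*(1+κ) : ℝ) = (4*β)^((1:ℝ) + (-(1/κ))*(1+κ)) := by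
      rw [Real.rpow_add h4β, Real.rpow_one]
    have ha2 : (1:ℝ) + (-(1/κ))*(1+κ) = -(1/κ) := by field_simp; ring
    have hb' : (2:ℝ)^(n:ℕ) * (2:ℝ)^((-(1/κ^2) - n/κ)*(1+κ) : ℝ)
        = (2:ℝ)^(((n:ℝ)) + (-(1/κ^2) - n/κ)*(1+κ)) := by
      rw [Real.rpow_add two_pos, Real.rpow_natCast]
    have hb2 : ((n:ℝ)) + (-(1/κ^2) - n/κ)*(1+κ) = -(1/κ^2) - ((n:ℝ)+1)/κ := by
      field_simp
      ring
    calc (4*β) * (2:ℝ)^n * ((4*β)^((-(1/κ))*(1+κ)) * (2:ℝ)^((-(1/κ^2) - n/κ)*(1+κ)))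
        = ((4*β) * (4*β)^((-(1/κ))*(1+κ))) * ((2:ℝ)^(n:ℕ) * (2:ℝ)^((-(1/κ^2) - n/κ)*(1+κ))) := by
          ring
      _ = (4*β)^((1:ℝ) + (-(1/κ))*(1+κ)) * (2:ℝ)^(((n:ℝ)) + (-(1/κ^2) - n/κ)*(1+κ)) := by
          rw [ha, hb']
      _ = D1 * (2:ℝ)^((-(1/κ^2) - ((n:ℝ)+1)/κ) : ℝ) := by
          rw [ha2, hb2, hD1_def]
  -- main induction
  have key : ∀ n : ℕ, b n ≤ D1 * (2:ℝ)^((-(1/κ^2) - n/κ) : ℝ) := by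
    intro n
    induction n with
    | zero =>
      have e0 : (-(1/κ^2) - (0:ℕ)/κ : ℝ) = -(1/κ^2) := by push_cast; ring
      rw [e0]
      calc b 0 ≤ ((4*β) ^ (1/κ))⁻¹ * ((2:ℝ) ^ (1/κ^2))⁻¹ := hb0
        _ = D1 * (2:ℝ)^(-(1/κ^2):ℝ) := by
            rw [hD1_def, Real.rpow_neg h4β.le, Real.rpow_neg (by norm_num : (0:ℝ) ≤ 2)]
    | succ n ih =>
      have h2 : (b n)^(1+κ) ≤ (D1 * (2:ℝ)^((-(1/κ^2) - n/κ) : ℝ))^(1+κ) :=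
        Real.rpow_le_rpow (hb_nonneg n) ih (by linarith)
      have hcast : (-(1/κ^2) - ((n:ℕ)+1 : ℕ)/κ : ℝ) = (-(1/κ^2) - ((n:ℝ)+1)/κ : ℝ) := by
        push_cast; ring
      rw [hcast]
      calc b (n+1) ≤ (4*β) * 2^n * (b n)^(1+κ) := hstep n
        _ ≤ (4*β) * 2^n * (D1 * (2:ℝ)^((-(1/κ^2) - n/κ) : ℝ))^(1+κ) := by
            apply mul_le_mul_of_nonneg_left h2 (by positivity)
        _ = D1 * (2:ℝ)^((-(1/κ^2) - ((n:ℝ)+1)/κ) : ℝ) := hident n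
  -- pass to the limit
  have hfin : ∀ n : ℕ, σ (2*M₀) ^ (1/r)
      ≤ (D1 * (2:ℝ)^(-(1/κ^2):ℝ)) * ((2:ℝ)^(-(1/κ):ℝ))^n := by
    intro n
    have h1 : σ (2*M₀) ≤ σ (k n) :=
      hσ_anti (mem_Ici.mpr (hk_ge n)) (mem_Ici.mpr h2M) (hk_lt2 n)
    have h2 : σ (2*M₀) ^ (1/r) ≤ b n :=
      Real.rpow_le_rpow (hσ_nonneg _ h2M) h1 (by positivity)
    refine h2.trans ((key n).trans_eq ?_)
    rw [mul_assoc]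
    congr 1
    rw [← Real.rpow_natCast ((2:ℝ)^(-(1/κ):ℝ)) n, ← Real.rpow_mul (by norm_num : (0:ℝ) ≤ 2),
      ← Real.rpow_add two_pos]
    congr 1
    ring
  have hc1 : (2:ℝ)^(-(1/κ):ℝ) < 1 :=
    Real.rpow_lt_one_of_one_lt_of_neg one_lt_two (neg_lt_zero.mpr (by positivity))
  have hc0 : (0:ℝ) ≤ (2:ℝ)^(-(1/κ):ℝ) := Real.rpow_nonneg (by norm_num) _
  have htend : Filter.Tendsto
      (fun n : ℕ => (D1 * (2:ℝ)^(-(1/κ^2):ℝ)) * ((2:ℝ)^(-(1/κ):ℝ))^n)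
      Filter.atTop (nhds 0) := by
    rw [show (0:ℝ) = (D1 * (2:ℝ)^(-(1/κ^2):ℝ)) * 0 by ring]
    exact (tendsto_pow_atTop_nhds_zero_of_lt_one hc0 hc1).const_mul _
  have hle0 : σ (2*M₀) ^ (1/r) ≤ 0 := ge_of_tendsto' htend hfin
  by_contra hne
  have hpos : 0 < σ (2*M₀) := lt_of_le_of_ne hσ2Mnn (Ne.symm hne)
  have : 0 < σ (2*M₀) ^ (1/r) := Real.rpow_pos_of_pos hpos _
  linarith
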